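/- Let A be the constant 3×3 matrix [[0,0,0],[1,0,0],[0,0,0]]. For continuous v_H = (v_{H₁}, v_{H₂}, v_{H₃}) : [0,1] → ℝ³, let V_V : [0,1] → ℝ³ be the solution of V_V'(s) = −A·v_H(s) with V_V(0) = 0. Then V_V(1) = (0, −∫₀¹ v_{H₁}(s) ds, 0); in particular the holonomy map v_H ↦ V_V(1) has image contained in the line ℝ·(0,1,0) and is not surjective onto ℝ³ (hence integral curves of X₃ in the 6-dimensional feature space are singular). -/

import Mathlib

/-- The image of the holonomy map along an integral curve of `X₃`: the set of values
`V_V(1)` of solutions of `V_V' = −A·v_H` with `V_V(0) = 0`, as the continuous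
horizontal datum `v_H` varies. -/
def holonomyImage (A : Matrix (Fin 3) (Fin 3) ℝ) : Set (Fin 3 → ℝ) :=
  {w | ∃ vH VV : ℝ → (Fin 3 → ℝ), Continuous vH ∧
    (∀ s ∈ Set.Icc (0 : ℝ) 1,
      HasDerivWithinAt VV (-(A.mulVec (vH s))) (Set.Icc (0 : ℝ) 1) s) ∧
    VV 0 = 0 ∧ VV 1 = w}

/-- For the admissibility system of an integral curve of `X₃`, with
`A = [[0,0,0],[1,0,0],[0,0,0]]`, the solution of `V_V' = −A·v_H`, `V_V(0) = 0`
satisfies `V_V(1) = (0, −∫₀¹ v_H₁, 0)`; hence the holonomy map has image contained in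
the line `ℝ·(0,1,0)` and is not surjective onto `ℝ³`, so integral curves of `X₃` are
singular. -/
lemma ftc_aux (f g : ℝ → ℝ) (hg : Continuous g)
    (hd : ∀ s ∈ Set.Icc (0:ℝ) 1, HasDerivWithinAt f (g s) (Set.Icc 0 1) s) :
    f 1 - f 0 = ∫ s in (0:ℝ)..1, g s := by
  have hcont : ContinuousOn f (Set.Icc 0 1) := fun x hx => (hd x hx).continuousWithinAt
  have h := intervalIntegral.integral_eq_sub_of_hasDeriv_right_of_le (by norm_num) hcont
    (fun x hx => (hd x ⟨le_of_lt hx.1, le_of_lt hx.2⟩).mono_of_mem_nhdsWithin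
      (Icc_mem_nhdsGT_of_mem ⟨le_of_lt hx.1, hx.2⟩))
    (hg.intervalIntegrable 0 1)
  linarith [h]

lemma main_aux (A : Matrix (Fin 3) (Fin 3) ℝ)
    (hA : A = !![0, 0, 0; 1, 0, 0; 0, 0, 0])
    (vH VV : ℝ → (Fin 3 → ℝ)) (hvH : Continuous vH)
    (hD : ∀ s ∈ Set.Icc (0 : ℝ) 1,
        HasDerivWithinAt VV (-(A.mulVec (vH s))) (Set.Icc (0 : ℝ) 1) s)
    (h0 : VV 0 = 0) :
    VV 1 = ![0, -∫ s in (0 : ℝ)..1, vH s 0, 0] := by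
  have hmv : ∀ v : Fin 3 → ℝ, -(A.mulVec v) = ![0, -(v 0), 0] := by
    intro v
    funext i
    fin_cases i <;>
      simp [hA, Matrix.mulVec, dotProduct, Fin.sum_univ_three, Matrix.vecHead]
  have hcomp : ∀ i : Fin 3, ∀ s ∈ Set.Icc (0:ℝ) 1,
      HasDerivWithinAt (fun t => VV t i) ((![0, -(vH s 0), 0] : Fin 3 → ℝ) i)
        (Set.Icc 0 1) s := by
    intro i s hs
    have := (hasDerivWithinAt_pi.1 (hD s hs)) i
    rwa [hmv] at this
  have key : ∀ i : Fin 3,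
      VV 1 i - VV 0 i = ∫ s in (0:ℝ)..1, (![0, -(vH s 0), 0] : Fin 3 → ℝ) i := by
    intro i
    refine ftc_aux _ _ ?_ (hcomp i)
    fin_cases i
    · simpa using continuous_const
    · exact (((continuous_apply (0 : Fin 3)).comp hvH).neg : Continuous fun s => -(vH s 0))
    · simpa using continuous_const
  funext i
  have hk := key i
  rw [h0] at hk
  fin_cases i
  · simpa using hk
  · simpa [intervalIntegral.integral_neg] using hk
  · simpa using hk

theorem stmt_12
    (A : Matrix (Fin 3) (Fin 3) ℝ)
    (hA : A = !![0, 0, 0; 1, 0, 0; 0, 0, 0]) :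
    (∀ vH VV : ℝ → (Fin 3 → ℝ), Continuous vH →
      (∀ s ∈ Set.Icc (0 : ℝ) 1,
        HasDerivWithinAt VV (-(A.mulVec (vH s))) (Set.Icc (0 : ℝ) 1) s) →
      VV 0 = 0 →
      VV 1 = ![0, -∫ s in (0 : ℝ)..1, vH s 0, 0]) ∧
    (holonomyImage A ⊆ {w | ∃ c : ℝ, w = c • ![0, 1, 0]}) ∧
    holonomyImage A ≠ Set.univ := by
  refine ⟨fun vH VV hc hD h0 => main_aux A hA vH VV hc hD h0, ?_, ?_⟩
  · rintro w ⟨vH, VV, hc, hD, h0, h1⟩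
    have := main_aux A hA vH VV hc hD h0
    rw [h1] at this
    refine ⟨-∫ s in (0:ℝ)..1, vH s 0, ?_⟩
    rw [this]
    funext i
    fin_cases i <;> simp
  · intro h
    have hmem : (![1, 0, 0] : Fin 3 → ℝ) ∈ holonomyImage A := h ▸ Set.mem_univ _
    obtain ⟨vH, VV, hc, hD, h0, h1⟩ := hmem
    have := main_aux A hA vH VV hc hD h0
    rw [h1] at this
    have h00 := congrFun this 0
    simp at h00
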